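/- arXiv:1807.10058 — 2 statements merged into one kernel-verified Lean document; each statement's English description precedes it below -/
import Mathlib

section
/- Let d ≥ 1 and let W be a finite subgroup of GL(d,ℤ). For all k, ℓ ∈ ℤ^d and all θ ∈ ℝ^d the recurrence relation ⟨k,θ⟩_s · ⟨ℓ,θ⟩_s = (1/|W|) · Σ_{w∈W} ⟨k + wᵀℓ, θ⟩_s = (1/|W|) · Σ_{w∈W} ⟨ℓ + wᵀk, θ⟩_s holds. -/
noncomputable section
open Complex Matrix

/-- The W-symmetrization (generalized cosine)
`⟨k,θ⟩ₛ = (1/|W|) · Σ_{w∈W} exp(2πi · kᵀ(wθ))` for a finite subgroup `W` of `GL(d,ℤ)`. -/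
def gencos {d : ℕ} (W : Subgroup (Matrix.GeneralLinearGroup (Fin d) ℤ)) [Fintype W]
    (k : Fin d → ℤ) (θ : Fin d → ℝ) : ℂ :=
  (1 / (Fintype.card W : ℂ)) * ∑ w : W, Complex.exp (2 * Real.pi * Complex.I *
    ∑ i, (k i : ℂ) *
      ∑ j, (((w : Matrix.GeneralLinearGroup (Fin d) ℤ) : Matrix (Fin d) (Fin d) ℤ) i j : ℂ) * (θ j : ℂ))

private def pairC {d : ℕ} (k : Fin d → ℤ) (M : Matrix (Fin d) (Fin d) ℤ) (θ : Fin d → ℝ) : ℂ :=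
  ∑ i, (k i : ℂ) * ∑ j, (M i j : ℂ) * (θ j : ℂ)

private lemma pairC_add {d : ℕ} (k ℓ : Fin d → ℤ) (M N : Matrix (Fin d) (Fin d) ℤ)
    (θ : Fin d → ℝ) :
    pairC (k + Mᵀ.mulVec ℓ) N θ = pairC k N θ + pairC ℓ (M * N) θ := by
  have hp : ∀ (m : Fin d → ℤ) (P : Matrix (Fin d) (Fin d) ℤ),
      pairC m P θ = (fun i => (m i : ℂ)) ⬝ᵥ (P.map (Int.cast : ℤ → ℂ)).mulVec
        (fun j => ((θ j : ℝ) : ℂ)) := by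
    intro m P
    rfl
  rw [hp, hp, hp]
  have h1 : (fun i => (((k + Mᵀ.mulVec ℓ) i : ℤ) : ℂ)) =
      (fun i => (k i : ℂ)) + (Mᵀ.map (Int.cast : ℤ → ℂ)).mulVec (fun i => (ℓ i : ℂ)) := by
    funext i
    simp [Matrix.mulVec, dotProduct, Matrix.map_apply]
  rw [h1, add_dotProduct]
  congr 1
  rw [Matrix.transpose_map, Matrix.mulVec_transpose,
    show (M * N).map (Int.cast : ℤ → ℂ) = M.map Int.cast * N.map Int.cast from
      Matrix.map_mul (f := Int.castRingHom ℂ),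
    ← Matrix.mulVec_mulVec, Matrix.dotProduct_mulVec, Matrix.vecMul_vecMul,
    Matrix.mulVec_mulVec, Matrix.dotProduct_mulVec]

lemma gencos_main {d : ℕ} (W : Subgroup (Matrix.GeneralLinearGroup (Fin d) ℤ)) [Fintype W]
    (k ℓ : Fin d → ℤ) (θ : Fin d → ℝ) :
    gencos W k θ * gencos W ℓ θ =
      (1 / (Fintype.card W : ℂ)) *
        ∑ w : W, gencos W (k + (((w : Matrix.GeneralLinearGroup (Fin d) ℤ) : Matrix (Fin d) (Fin d) ℤ))ᵀ.mulVec ℓ) θ := by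
  have hg : ∀ (m : Fin d → ℤ), gencos W m θ =
      (1 / (Fintype.card W : ℂ)) * ∑ w : W, Complex.exp (2 * Real.pi * Complex.I *
        pairC m ((w : Matrix.GeneralLinearGroup (Fin d) ℤ) : Matrix (Fin d) (Fin d) ℤ) θ) := by
    intro m; rfl
  simp only [hg]
  have key : (∑ u : W, Complex.exp (2 * Real.pi * Complex.I * pairC k ((u : Matrix.GeneralLinearGroup (Fin d) ℤ) : Matrix (Fin d) (Fin d) ℤ) θ)) *
      (∑ v : W, Complex.exp (2 * Real.pi * Complex.I * pairC ℓ ((v : Matrix.GeneralLinearGroup (Fin d) ℤ) : Matrix (Fin d) (Fin d) ℤ) θ)) =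
      ∑ x : W, ∑ w : W, Complex.exp (2 * Real.pi * Complex.I *
        pairC (k + (((x : Matrix.GeneralLinearGroup (Fin d) ℤ) : Matrix (Fin d) (Fin d) ℤ))ᵀ.mulVec ℓ)
          ((w : Matrix.GeneralLinearGroup (Fin d) ℤ) : Matrix (Fin d) (Fin d) ℤ) θ) := by
    rw [Finset.sum_mul_sum]
    refine Eq.trans (Finset.sum_congr rfl fun u _ => ?_) Finset.sum_comm
    refine (Fintype.sum_equiv (Equiv.mulRight u) _ _ fun x => ?_).symm
    simp only [Equiv.coe_mulRight]
    rw [pairC_add, mul_add, Complex.exp_add]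
    congr 3
  rw [mul_mul_mul_comm, key]
  conv_rhs => rw [← Finset.mul_sum]
  ring

/-- the recurrence relation
`⟨k,θ⟩ₛ · ⟨ℓ,θ⟩ₛ = (1/|W|) Σ_{w∈W} ⟨k + wᵀℓ, θ⟩ₛ = (1/|W|) Σ_{w∈W} ⟨ℓ + wᵀk, θ⟩ₛ`. -/
theorem gencos_recurrence {d : ℕ} (hd : 1 ≤ d)
    (W : Subgroup (Matrix.GeneralLinearGroup (Fin d) ℤ)) [Fintype W]
    (k ℓ : Fin d → ℤ) (θ : Fin d → ℝ) :
    gencos W k θ * gencos W ℓ θ =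
        (1 / (Fintype.card W : ℂ)) *
          ∑ w : W, gencos W (k + (((w : Matrix.GeneralLinearGroup (Fin d) ℤ) : Matrix (Fin d) (Fin d) ℤ))ᵀ.mulVec ℓ) θ ∧
      gencos W k θ * gencos W ℓ θ =
        (1 / (Fintype.card W : ℂ)) *
          ∑ w : W, gencos W (ℓ + (((w : Matrix.GeneralLinearGroup (Fin d) ℤ) : Matrix (Fin d) (Fin d) ℤ))ᵀ.mulVec k) θ := by
  exact ⟨gencos_main W k ℓ θ, by rw [mul_comm]; exact gencos_main W ℓ k θ⟩
end
end

section
/- The subgroup G of GL(3,ℤ) generated by s1, s2, s3 has exactly 24 elements and is isomorphic as a group to the symmetric group on 4 letters. -/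
noncomputable section
open Complex

def s1 : Matrix (Fin 3) (Fin 3) ℤ := !![-1,0,0; 1,1,0; 0,0,1]
def s2 : Matrix (Fin 3) (Fin 3) ℤ := !![1,1,0; 0,-1,0; 0,1,1]
def s3 : Matrix (Fin 3) (Fin 3) ℤ := !![1,0,0; 0,1,1; 0,0,-1]

lemma s1s1 : s1 * s1 = 1 := by decide
lemma s2s2 : s2 * s2 = 1 := by decide
lemma s3s3 : s3 * s3 = 1 := by decide

/-- `s1` (resp. `s2`, `s3`) as an element of GL(3,ℤ); it is its own inverse. -/
def g1 : Matrix.GeneralLinearGroup (Fin 3) ℤ := ⟨s1, s1, s1s1, s1s1⟩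
def g2 : Matrix.GeneralLinearGroup (Fin 3) ℤ := ⟨s2, s2, s2s2, s2s2⟩
def g3 : Matrix.GeneralLinearGroup (Fin 3) ℤ := ⟨s3, s3, s3s3, s3s3⟩

/-- The subgroup of GL(3,ℤ) generated by `s1, s2, s3`. -/
def G : Subgroup (Matrix.GeneralLinearGroup (Fin 3) ℤ) := Subgroup.closure {g1, g2, g3}

/-- `f k θ = (1/24) · Σ_{w∈G} exp(2πi · kᵀ(wθ))`, the symmetrized exponential sum
(generalized cosine) over `G`.  Since `G` is a finite set (24 elements), the
`finsum` over the carrier of `G` is the ordinary finite sum. -/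
def f (k : Fin 3 → ℤ) (θ : Fin 3 → ℝ) : ℂ :=
  (1 / 24) * ∑ᶠ w ∈ (G : Set (Matrix.GeneralLinearGroup (Fin 3) ℤ)),
    Complex.exp (2 * Real.pi * Complex.I *
      ∑ i, (k i : ℂ) * ∑ j, ((w : Matrix (Fin 3) (Fin 3) ℤ) i j : ℂ) * (θ j : ℂ))


/-- Permutation matrix of `σ`. -/
def Pm (σ : Equiv.Perm (Fin 4)) : Matrix (Fin 4) (Fin 4) ℤ :=
  Matrix.of fun i j => if σ j = i then 1 else 0

lemma Pm_mul (σ τ : Equiv.Perm (Fin 4)) : Pm (σ * τ) = Pm σ * Pm τ := by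
  ext i j
  rw [Matrix.mul_apply]
  rw [Finset.sum_eq_single (τ j)]
  · simp [Pm]
    congr
  · intro k _ hk
    simp [Pm, hk, Ne.symm hk]
  · simp

def Bm : Matrix (Fin 3) (Fin 4) ℤ := !![1,-1,0,0; 0,1,-1,0; 0,0,1,-1]
def Dm : Matrix (Fin 4) (Fin 3) ℤ := !![1,1,1; 0,1,1; 0,0,1; 0,0,0]

def mrep (σ : Equiv.Perm (Fin 4)) : Matrix (Fin 3) (Fin 3) ℤ := Bm * Pm σ * Dm

lemma mrep_key : ∀ σ : Equiv.Perm (Fin 4), mrep σ * Bm = Bm * Pm σ := by decide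

lemma mrep_one : mrep 1 = 1 := by decide

lemma mrep_mul (σ τ : Equiv.Perm (Fin 4)) : mrep (σ * τ) = mrep σ * mrep τ := by
  have : mrep σ * mrep τ = (mrep σ * Bm) * (Pm τ * Dm) := by
    simp only [mrep, Matrix.mul_assoc]
  rw [this, mrep_key, mrep, Pm_mul, Matrix.mul_assoc, Matrix.mul_assoc, Matrix.mul_assoc]

lemma mrep_inv_mul (σ : Equiv.Perm (Fin 4)) : mrep σ * mrep σ⁻¹ = 1 := by
  rw [← mrep_mul, mul_inv_cancel, mrep_one]

lemma mrep_mul_inv (σ : Equiv.Perm (Fin 4)) : mrep σ⁻¹ * mrep σ = 1 := by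
  rw [← mrep_mul, inv_mul_cancel, mrep_one]

/-- The standard representation of `S₄` in `GL(3,ℤ)`. -/
def phi : Equiv.Perm (Fin 4) →* Matrix.GeneralLinearGroup (Fin 3) ℤ where
  toFun σ := ⟨mrep σ, mrep σ⁻¹, mrep_inv_mul σ, mrep_mul_inv σ⟩
  map_one' := Units.ext mrep_one
  map_mul' σ τ := Units.ext (mrep_mul σ τ)

lemma phi_injective : Function.Injective phi := by
  rw [injective_iff_map_eq_one]
  intro σ h
  have h' : mrep σ = 1 := congrArg Units.val h
  revert h'
  revert σ
  decide

lemma phi_swap01 : phi (Equiv.swap 0 1) = g1 :=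
  Units.ext (by show mrep (Equiv.swap 0 1) = s1; decide)

lemma phi_swap12 : phi (Equiv.swap 1 2) = g2 :=
  Units.ext (by show mrep (Equiv.swap 1 2) = s2; decide)

lemma phi_swap23 : phi (Equiv.swap 2 3) = g3 :=
  Units.ext (by show mrep (Equiv.swap 2 3) = s3; decide)

lemma top_eq_closure_adj :
    (⊤ : Subgroup (Equiv.Perm (Fin 4))) =
      Subgroup.closure {Equiv.swap 0 1, Equiv.swap 1 2, Equiv.swap 2 3} := by
  have h := Subgroup.closure_eq_top_of_mclosure_eq_top
    (Equiv.Perm.mclosure_swap_castSucc_succ 3)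
  have hset : (Set.range fun i : Fin 3 => Equiv.swap (Fin.castSucc i) i.succ) =
      ({Equiv.swap 0 1, Equiv.swap 1 2, Equiv.swap 2 3} :
        Set (Equiv.Perm (Fin 4))) := by
    ext σ
    simp only [Set.mem_range, Set.mem_insert_iff, Set.mem_singleton_iff]
    constructor
    · rintro ⟨i, rfl⟩
      fin_cases i <;> simp <;> decide
    · rintro (rfl | rfl | rfl)
      · exact ⟨0, by decide⟩
      · exact ⟨1, by decide⟩
      · exact ⟨2, by decide⟩
  rw [← h, hset]

lemma range_phi_eq_G : phi.range = G := by
  rw [MonoidHom.range_eq_map, top_eq_closure_adj, MonoidHom.map_closure, G]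
  congr 1
  rw [Set.image_insert_eq, Set.image_insert_eq, Set.image_singleton,
    phi_swap01, phi_swap12, phi_swap23]

/-- the subgroup `G` of GL(3,ℤ) generated by `s1, s2, s3` has exactly
24 elements and is isomorphic to the symmetric group on 4 letters. -/
theorem G_card_and_iso_S4 :
    Nat.card G = 24 ∧ Nonempty (G ≃* Equiv.Perm (Fin 4)) := by
  have e : Equiv.Perm (Fin 4) ≃* phi.range := MonoidHom.ofInjective phi_injective
  have e2 : G ≃* Equiv.Perm (Fin 4) :=
    (MulEquiv.subgroupCongr range_phi_eq_G.symm).trans e.symm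
  constructor
  · rw [Nat.card_congr e2.toEquiv, Nat.card_eq_fintype_card, Fintype.card_perm]
    decide
  · exact ⟨e2⟩
end
end
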